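/- Let R be a local ring. Then M₂(R) is strongly π-regular if and only if every matrix in M₂(J(R)) is nilpotent and for all u ∈ U(R), w ∈ J(R) the polynomial t² - ut - w has a left root in U(R) and a left root in J(R). -/
import Mathlib


/-- An element of a ring is strongly π-regular if both chains `aS ⊇ a²S ⊇ ⋯` and
`Sa ⊇ Sa² ⊇ ⋯` terminate. -/
def IsStronglyPiRegular {S : Type*} [Ring S] (a : S) : Prop :=
  (∃ (n : ℕ) (x : S), a ^ n = a ^ (n + 1) * x) ∧
  (∃ (n : ℕ) (x : S), a ^ n = x * a ^ (n + 1))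


section LocalLemmas
variable {R : Type*} [Ring R] [IsLocalRing R]

lemma isUnit_of_two_sided {a c : R} (h1 : a * c = 1) (h2 : c * a = 1) : IsUnit a :=
  ⟨⟨a, c, h1, h2⟩, rfl⟩

/-- In a local ring, a right-invertible element is a unit. -/
lemma isUnit_of_right_inv {a c : R} (h : a * c = 1) : IsUnit a := by
  rcases IsLocalRing.isUnit_or_isUnit_of_add_one (a := c * a) (b := 1 - c * a)
      (by noncomm_ring) with hu | hu
  · have hid : (c * a) * (c * a) = c * a := by
      have : c * (a * c) * a = c * a := by rw [h]; noncomm_ring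
      calc (c * a) * (c * a) = c * (a * c) * a := by noncomm_ring
      _ = c * a := this
    have h1 : c * a = 1 := by
      rcases hu with ⟨v, hv⟩
      have h3 := congrArg (fun t => (↑v⁻¹ : R) * t) hid
      simp only [← hv, ← mul_assoc, Units.inv_mul, one_mul] at h3
      rw [← hv, h3]
    exact isUnit_of_two_sided h h1
  · have hz : (1 - c * a) * c = 0 := by
      have h4 : c * (a * c) = c := by rw [h, mul_one]
      calc (1 - c * a) * c = c - c * (a * c) := by noncomm_ring
      _ = 0 := by rw [h4, sub_self]
    rcases hu with ⟨v, hv⟩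
    have hc : c = 0 := by
      have h5 := congrArg (fun t => (↑v⁻¹ : R) * t) hz
      simp only [← hv, ← mul_assoc, Units.inv_mul, one_mul, mul_zero] at h5
      exact h5
    exact absurd (by rw [← h, hc, mul_zero] : (1:R) = 0) one_ne_zero

/-- In a local ring, a left-invertible element is a unit. -/
lemma isUnit_of_left_inv {a c : R} (h : c * a = 1) : IsUnit a := by
  have hc : IsUnit c := isUnit_of_right_inv h
  rcases hc with ⟨v, rfl⟩
  have : a = ↑v⁻¹ := by
    have := congrArg (fun t => (↑v⁻¹ : R) * t) h
    simpa [← mul_assoc, Units.inv_mul] using this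
  rw [this]; exact ⟨v⁻¹, rfl⟩

lemma isUnit_left_of_mul {a b : R} (h : IsUnit (a * b)) : IsUnit a := by
  rcases isUnit_iff_exists.mp h with ⟨v, hv1, _⟩
  exact isUnit_of_right_inv (a := a) (c := b * v) (by rw [← mul_assoc]; exact hv1)

lemma isUnit_right_of_mul {a b : R} (h : IsUnit (a * b)) : IsUnit b := by
  rcases isUnit_iff_exists.mp h with ⟨v, _, hv2⟩
  exact isUnit_of_left_inv (a := b) (c := v * a) (by rw [mul_assoc]; exact hv2)

lemma nonunit_mul_left {a : R} (b : R) (h : ¬ IsUnit a) : ¬ IsUnit (a * b) :=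
  fun hu => h (isUnit_left_of_mul hu)

lemma nonunit_mul_right (a : R) {b : R} (h : ¬ IsUnit b) : ¬ IsUnit (a * b) :=
  fun hu => h (isUnit_right_of_mul hu)

lemma nonunit_add {a b : R} (ha : ¬ IsUnit a) (hb : ¬ IsUnit b) : ¬ IsUnit (a + b) := by
  intro h
  rcases h with ⟨v, hv⟩
  have h1 : (↑v⁻¹ : R) * a + (↑v⁻¹ : R) * b = 1 := by
    rw [← mul_add, ← hv, Units.inv_mul]
  rcases IsLocalRing.isUnit_or_isUnit_of_add_one h1 with hu | hu
  · exact ha (isUnit_right_of_mul hu)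
  · exact hb (isUnit_right_of_mul hu)

lemma isUnit_add_nonunit {a b : R} (ha : IsUnit a) (hb : ¬ IsUnit b) : IsUnit (a + b) := by
  by_contra h
  have : ¬ IsUnit (a + b + -b) := nonunit_add h (by simpa using hb)
  simp only [add_neg_cancel_right] at this
  exact this ha

lemma nonunit_of_nilpotent {a : R} (h : IsNilpotent a) : ¬ IsUnit a := by
  rcases h with ⟨n, hn⟩
  intro hu
  have : IsUnit (a ^ n) := hu.pow n
  rw [hn] at this
  exact one_ne_zero ((isUnit_zero_iff.mp this).symm)

end LocalLemmas

section GenRing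
variable {S : Type*} [Ring S]

lemma spr_of_nilpotent {a : S} (h : IsNilpotent a) : IsStronglyPiRegular a := by
  rcases h with ⟨n, hn⟩
  exact ⟨⟨n, 0, by rw [hn, mul_zero]⟩, ⟨n, 0, by rw [hn, zero_mul]⟩⟩

lemma spr_of_isUnit {a : S} (h : IsUnit a) : IsStronglyPiRegular a := by
  rcases isUnit_iff_exists.mp h with ⟨b, h1, h2⟩
  exact ⟨⟨0, b, by simp [h1]⟩, ⟨0, b, by simp [h2]⟩⟩

lemma conj_pow2 {p q a : S} (hpq : p * q = 1) (hqp : q * p = 1) (k : ℕ) :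
    (q * a * p) ^ k = q * a ^ k * p := by
  induction k with
  | zero => simp [pow_zero, hqp]
  | succ k ih =>
      rw [pow_succ, ih, pow_succ]
      calc q * a ^ k * p * (q * a * p) = q * a ^ k * (p * q) * a * p := by
            simp [mul_assoc]
      _ = q * (a ^ k * a) * p := by rw [hpq]; simp [mul_assoc]

lemma spr_similar {p q a : S} (hpq : p * q = 1) (hqp : q * p = 1)
    (h : IsStronglyPiRegular a) : IsStronglyPiRegular (q * a * p) := by
  obtain ⟨⟨n, x, hx⟩, ⟨m, y, hy⟩⟩ := h
  constructor
  · refine ⟨n, q * x * p, ?_⟩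
    rw [conj_pow2 hpq hqp, conj_pow2 hpq hqp]
    calc q * a ^ n * p = q * (a ^ (n+1) * x) * p := by rw [hx]
    _ = q * a ^ (n+1) * (p * q) * x * p := by rw [hpq]; simp [mul_assoc]
    _ = q * a ^ (n + 1) * p * (q * x * p) := by simp [mul_assoc]
  · refine ⟨m, q * y * p, ?_⟩
    rw [conj_pow2 hpq hqp, conj_pow2 hpq hqp]
    calc q * a ^ m * p = q * (y * a ^ (m+1)) * p := by rw [hy]
    _ = q * y * (p * q) * a ^ (m+1) * p := by rw [hpq]; simp [mul_assoc]
    _ = q * y * p * (q * a ^ (m + 1) * p) := by simp [mul_assoc]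

/-- Azumaya/Fitting lemma: a strongly π-regular element admits a commuting
idempotent splitting it into a unit part and a nilpotent part. -/
lemma fitting {a : S} (h : IsStronglyPiRegular a) :
    ∃ (n : ℕ) (e : S), 0 < n ∧ e * e = e ∧ a * e = e * a ∧ a ^ n * (1 - e) = 0 ∧
      IsUnit (a * e + 1 - e) := by
  obtain ⟨⟨n₁, x, hx₁⟩, ⟨n₂, y, hy₁⟩⟩ := h
  set n := n₁ + n₂ + 1 with hn
  -- bump the exponents
  have hx : ∀ m, n₁ ≤ m → a ^ m = a ^ (m + 1) * x := by
    intro m hm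
    calc a ^ m = a ^ (m - n₁) * a ^ n₁ := by rw [← pow_add]; congr 1; omega
    _ = a ^ (m - n₁) * (a ^ (n₁ + 1) * x) := by rw [hx₁]
    _ = a ^ (m + 1) * x := by rw [← mul_assoc, ← pow_add]; congr 2; omega
  have hy : ∀ m, n₂ ≤ m → a ^ m = y * a ^ (m + 1) := by
    intro m hm
    calc a ^ m = a ^ n₂ * a ^ (m - n₂) := by rw [← pow_add]; congr 1; omega
    _ = y * a ^ (n₂ + 1) * a ^ (m - n₂) := by rw [hy₁]
    _ = y * a ^ (m + 1) := by rw [mul_assoc, ← pow_add]; congr 2; omega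
  have H1 : ∀ m k, n₁ ≤ m → a ^ m = a ^ (m + k) * x ^ k := by
    intro m k hm
    induction k with
    | zero => simp
    | succ k ih =>
        calc a ^ m = a ^ (m+k) * x ^ k := ih
        _ = a ^ (m+k+1) * x * x ^ k := by rw [← hx (m+k) (by omega)]
        _ = a ^ (m+k+1) * (x * x ^ k) := by rw [mul_assoc]
        _ = a ^ (m+k+1) * x ^ (k+1) := by rw [← pow_succ' x]
        _ = a ^ (m+(k+1)) * x ^ (k+1) := by rw [← Nat.add_assoc]
  have H2 : ∀ m k, n₂ ≤ m → a ^ m = y ^ k * a ^ (m + k) := by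
    intro m k hm
    induction k with
    | zero => simp
    | succ k ih =>
        calc a ^ m = y ^ k * a ^ (m+k) := ih
        _ = y ^ k * (y * a ^ (m+k+1)) := by rw [← hy (m+k) (by omega)]
        _ = (y ^ k * y) * a ^ (m+k+1) := by rw [mul_assoc]
        _ = y ^ (k+1) * a ^ (m+k+1) := by conv_rhs => rw [pow_succ y]
        _ = y ^ (k+1) * a ^ (m+(k+1)) := by rw [← Nat.add_assoc]
  have hxn : a ^ n = a ^ (n+1) * x := hx n (by omega)
  have hyn : a ^ n = y * a ^ (n+1) := hy n (by omega)
  have H3 : ∀ k, y ^ k * a ^ n = a ^ n * x ^ k := by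
    intro k
    induction k with
    | zero => simp
    | succ k ih =>
        have hya : y * a ^ n = a ^ n * x := by
          calc y * a ^ n = y * (a ^ (n+1) * x) := by rw [← hxn]
          _ = (y * a ^ (n+1)) * x := by rw [mul_assoc]
          _ = a ^ n * x := by rw [← hyn]
        calc y ^ (k+1) * a ^ n = y * (y ^ k * a ^ n) := by
              rw [pow_succ' y, mul_assoc]
        _ = y * (a ^ n * x ^ k) := by rw [ih]
        _ = (y * a ^ n) * x ^ k := by rw [mul_assoc]
        _ = a ^ n * x * x ^ k := by rw [hya]
        _ = a ^ n * (x * x ^ k) := by rw [mul_assoc]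
        _ = a ^ n * x ^ (k+1) := by rw [← pow_succ' x]
  obtain ⟨e, he_def⟩ : ∃ e : S, e = a ^ n * x ^ n := ⟨_, rfl⟩
  have he' : e = y ^ n * a ^ n := by rw [he_def]; exact (H3 n).symm
  have k1 : a ^ n * e = a ^ n := by
    calc a ^ n * e = (a ^ n * a ^ n) * x ^ n := by rw [he_def, mul_assoc]
    _ = a ^ (n + n) * x ^ n := by rw [← pow_add]
    _ = a ^ n := (H1 n n (by omega)).symm
  have k2 : e * a ^ n = a ^ n := by
    calc e * a ^ n = y ^ n * (a ^ n * a ^ n) := by rw [he', mul_assoc]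
    _ = y ^ n * a ^ (n + n) := by rw [← pow_add]
    _ = a ^ n := (H2 n n (by omega)).symm
  have he : e * e = e := by
    calc e * e = e * (a ^ n * x ^ n) := by rw [← he_def]
    _ = (e * a ^ n) * x ^ n := by rw [mul_assoc]
    _ = a ^ n * x ^ n := by rw [k2]
    _ = e := he_def.symm
  have k3 : a ^ (n+1) * e = a ^ (n+1) := by
    calc a ^ (n+1) * e = (a * a ^ n) * e := by rw [pow_succ' a]
    _ = a * (a ^ n * e) := by rw [mul_assoc]
    _ = a * a ^ n := by rw [k1]
    _ = a ^ (n+1) := (pow_succ' a n).symm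
  have comm : a * e = e * a := by
    calc a * e = (a * a ^ n) * x ^ n := by rw [he_def, mul_assoc]
    _ = a ^ (n+1) * x ^ n := by rw [← pow_succ' a]
    _ = (y ^ n * a ^ (n+1+n)) * x ^ n := by rw [← H2 (n+1) n (by omega)]
    _ = y ^ n * (a ^ (n+1) * (a ^ n * x ^ n)) := by
          rw [pow_add a (n+1) n, mul_assoc, mul_assoc]
    _ = y ^ n * (a ^ (n+1) * e) := by rw [← he_def]
    _ = y ^ n * a ^ (n+1) := by rw [k3]
    _ = y ^ n * (a ^ n * a) := by rw [pow_succ a]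
    _ = (y ^ n * a ^ n) * a := by rw [mul_assoc]
    _ = e * a := by rw [← he']
  have hze : a ^ n * (1 - e) = 0 := by rw [mul_sub, mul_one, k1, sub_self]
  obtain ⟨c, hc_def⟩ : ∃ c : S, c = a ^ n * x ^ (n+1) := ⟨_, rfl⟩
  have hc' : c = y ^ (n+1) * a ^ n := by rw [hc_def]; exact (H3 (n+1)).symm
  have hac : a * c = e := by
    calc a * c = (a * a ^ n) * x ^ (n+1) := by rw [hc_def, mul_assoc]
    _ = a ^ (n+1) * (x * x ^ n) := by rw [← pow_succ' a, pow_succ' x]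
    _ = (a ^ (n+1) * x) * x ^ n := by rw [mul_assoc]
    _ = a ^ n * x ^ n := by rw [← hxn]
    _ = e := he_def.symm
  have hca : c * a = e := by
    calc c * a = (y ^ n * y) * (a ^ n * a) := by rw [hc', pow_succ y, pow_succ a, mul_assoc]
    _ = y ^ n * (y * (a ^ n * a)) := by rw [mul_assoc]
    _ = y ^ n * (y * a ^ (n+1)) := by rw [← pow_succ a]
    _ = y ^ n * a ^ n := by rw [← hyn]
    _ = e := he'.symm
  have hec : e * c = c := by
    calc e * c = (e * a ^ n) * x ^ (n+1) := by rw [hc_def, ← mul_assoc]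
    _ = a ^ n * x ^ (n+1) := by rw [k2]
    _ = c := hc_def.symm
  have hce : c * e = c := by
    calc c * e = y ^ (n+1) * (a ^ n * e) := by rw [hc', mul_assoc]
    _ = y ^ (n+1) * a ^ n := by rw [k1]
    _ = c := hc'.symm
  have h8 : e * (a * e) = a * e := by
    calc e * (a * e) = (e * a) * e := by rw [mul_assoc]
    _ = (a * e) * e := by rw [← comm]
    _ = a * (e * e) := by rw [mul_assoc]
    _ = a * e := by rw [he]
  have hvv' : (a * e + 1 - e) * (c + 1 - e) = 1 := by
    have h6 : (a * e + 1 - e) * (c + 1 - e) =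
        a * (e * c) + a * e - a * (e * e) + c + 1 - e - e * c - e + e * e := by
      noncomm_ring
    rw [h6, hec, he, hac]
    noncomm_ring
  have hv'v : (c + 1 - e) * (a * e + 1 - e) = 1 := by
    have h7 : (c + 1 - e) * (a * e + 1 - e) =
        (c * a) * e + c - c * e + a * e - e * (a * e) + 1 - e - e + e * e := by
      noncomm_ring
    rw [h7, hca, he, hce, h8]
    noncomm_ring
  refine ⟨n, e, by omega, he, comm, hze, ?_⟩
  have : a * e + 1 - e = a * e + (1 - e) := by noncomm_ring
  exact isUnit_iff_exists.mpr ⟨c + 1 - e, hvv', hv'v⟩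
end GenRing


section M2
variable {α : Type*}

lemma fin2_ext {a b c d a' b' c' d' : α} (h1 : a = a') (h2 : b = b') (h3 : c = c')
    (h4 : d = d') : !![a,b;c,d] = !![a',b';c',d'] := by
  rw [h1, h2, h3, h4]

lemma fin2_entries [Zero α] (A : Matrix (Fin 2) (Fin 2) α) :
    A 0 0 = (!![A 0 0, A 0 1; A 1 0, A 1 1]) 0 0 := by simp

end M2

section MatLocal
variable {R : Type*} [Ring R] [IsLocalRing R]

local notation "M2" => Matrix (Fin 2) (Fin 2) R

-- entries of !! matrices
example (a b c d : R) : (!![a,b;c,d]) 0 0 = a ∧ (!![a,b;c,d]) 0 1 = b ∧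
    (!![a,b;c,d]) 1 0 = c ∧ (!![a,b;c,d]) 1 1 = d := by
  refine ⟨?_, ?_, ?_, ?_⟩ <;> simp

/-- 2×2 matrix with unit diagonal and nonunit off-diagonal entries is a unit. -/
lemma isUnit_fin2_of_diag {p q r s : R} (hp : IsUnit p) (hs : IsUnit s)
    (hq : ¬ IsUnit q) (hr : ¬ IsUnit r) : IsUnit (!![p,q;r,s] : M2) := by
  set p' : R := ↑hp.unit⁻¹ with hp'
  have hpp' : p * p' = 1 := hp.mul_val_inv
  have hp'p : p' * p = 1 := hp.val_inv_mul
  have hs' : IsUnit (s - r * p' * q) := by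
    have : ¬ IsUnit (r * p' * q) := nonunit_mul_right _ hq
    rw [sub_eq_add_neg]
    exact isUnit_add_nonunit hs (by simpa using this)
  set s'' : R := ↑hs'.unit⁻¹ with hs''
  have h1 : (s - r * p' * q) * s'' = 1 := hs'.mul_val_inv
  have h2 : s'' * (s - r * p' * q) = 1 := hs'.val_inv_mul
  have hL : IsUnit (!![1,0;r*p',1] : M2) := by
    refine isUnit_iff_exists.mpr ⟨!![1,0;-(r*p'),1], ?_, ?_⟩ <;>
    · rw [Matrix.mul_fin_two, Matrix.one_fin_two]
      exact fin2_ext (by noncomm_ring) (by noncomm_ring) (by noncomm_ring) (by noncomm_ring)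
  have hU : IsUnit (!![p,q;0,s - r*p'*q] : M2) := by
    refine isUnit_iff_exists.mpr ⟨!![p', -(p'*q*s''); 0, s''], ?_, ?_⟩
    · rw [Matrix.mul_fin_two, Matrix.one_fin_two]
      refine fin2_ext ?_ ?_ (by noncomm_ring) ?_
      · rw [mul_zero, add_zero, hpp']
      · calc p * -(p'*q*s'') + q * s'' = -((p * p') * (q * s'')) + q * s'' := by noncomm_ring
        _ = 0 := by rw [hpp']; noncomm_ring
      · calc (0:R) * -(p'*q*s'') + (s - r*p'*q) * s'' = (s - r*p'*q) * s'' := by noncomm_ring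
        _ = 1 := h1
    · rw [Matrix.mul_fin_two, Matrix.one_fin_two]
      refine fin2_ext ?_ ?_ (by noncomm_ring) ?_
      · rw [mul_zero, add_zero, hp'p]
      · calc p' * q + -(p'*q*s'') * (s - r * p' * q)
            = p' * q + -((p' * q) * (s'' * (s - r * p' * q))) := by noncomm_ring
        _ = 0 := by rw [h2]; noncomm_ring
      · calc (0:R) * q + s'' * (s - r*p'*q) = s'' * (s - r*p'*q) := by noncomm_ring
        _ = 1 := h2
  have hfact : (!![p,q;r,s] : M2) = !![1,0;r*p',1] * !![p,q;0,s - r*p'*q] := by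
    rw [Matrix.mul_fin_two]
    refine fin2_ext (by noncomm_ring) (by noncomm_ring) ?_ (by noncomm_ring)
    calc r = r * (p' * p) + 1 * 0 := by rw [hp'p]; noncomm_ring
    _ = r * p' * p + 1 * 0 := by noncomm_ring
  rw [hfact]
  exact hL.mul hU

end MatLocal

section MatLocal2
variable {R : Type*} [Ring R] [IsLocalRing R]

local notation "M2" => Matrix (Fin 2) (Fin 2) R

/-- `B` is obtained from `A` by a similarity transformation. -/
def SimTo (A B : Matrix (Fin 2) (Fin 2) R) : Prop :=
  ∃ P Q : Matrix (Fin 2) (Fin 2) R, P * Q = 1 ∧ Q * P = 1 ∧ Q * A * P = B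

lemma simTo_refl (A : M2) : SimTo A A := ⟨1, 1, by simp, by simp, by simp⟩

lemma simTo_trans {A B C : M2} (h1 : SimTo A B) (h2 : SimTo B C) : SimTo A C := by
  obtain ⟨P₁, Q₁, h11, h12, h13⟩ := h1
  obtain ⟨P₂, Q₂, h21, h22, h23⟩ := h2
  refine ⟨P₁ * P₂, Q₂ * Q₁, ?_, ?_, ?_⟩
  · calc P₁ * P₂ * (Q₂ * Q₁) = P₁ * (P₂ * Q₂) * Q₁ := by simp [mul_assoc]
    _ = 1 := by rw [h21, mul_one, h11]
  · calc Q₂ * Q₁ * (P₁ * P₂) = Q₂ * (Q₁ * P₁) * P₂ := by simp [mul_assoc]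
    _ = 1 := by rw [h12, mul_one, h22]
  · calc Q₂ * Q₁ * A * (P₁ * P₂) = Q₂ * (Q₁ * A * P₁) * P₂ := by simp [mul_assoc]
    _ = C := by rw [h13]; exact h23

lemma simTo_symm {A B : M2} (h : SimTo A B) : SimTo B A := by
  obtain ⟨P, Q, h1, h2, h3⟩ := h
  refine ⟨Q, P, h2, h1, ?_⟩
  calc P * B * Q = P * (Q * A * P) * Q := by rw [h3]
  _ = (P * Q) * A * (P * Q) := by simp [mul_assoc]
  _ = A := by rw [h1]; simp

lemma simTo_spr {A B : M2} (h : SimTo A B) (hA : IsStronglyPiRegular A) :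
    IsStronglyPiRegular B := by
  obtain ⟨P, Q, h1, h2, h3⟩ := h
  rw [← h3]; exact spr_similar h1 h2 hA

lemma simTo_idem {A B : M2} (h : SimTo A B) (hA : A * A = A) : B * B = B := by
  obtain ⟨P, Q, h1, h2, h3⟩ := h
  rw [← h3]
  calc (Q * A * P) * (Q * A * P) = Q * A * (P * Q) * A * P := by simp [mul_assoc]
  _ = Q * (A * A) * P := by rw [h1]; simp [mul_assoc]
  _ = Q * A * P := by rw [hA]

lemma mul_entry (A B : M2) (i j : Fin 2) :
    (A * B) i j = A i 0 * B 0 j + A i 1 * B 1 j := by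
  rw [Matrix.mul_apply, Fin.sum_univ_two]

lemma nonunitE_mul_left {A : M2} (h : ∀ i j, ¬ IsUnit (A i j)) (B : M2) :
    ∀ i j, ¬ IsUnit ((A * B) i j) := by
  intro i j
  rw [mul_entry]
  exact nonunit_add (nonunit_mul_left _ (h i 0)) (nonunit_mul_left _ (h i 1))

lemma nonunitE_mul_right {A : M2} (h : ∀ i j, ¬ IsUnit (A i j)) (B : M2) :
    ∀ i j, ¬ IsUnit ((B * A) i j) := by
  intro i j
  rw [mul_entry]
  exact nonunit_add (nonunit_mul_right _ (h 0 j)) (nonunit_mul_right _ (h 1 j))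

lemma nonunit_zero : ¬ IsUnit (0 : R) := fun h => one_ne_zero ((isUnit_zero_iff.mp h).symm)

lemma isUnit_one_sub {B : M2} (h : ∀ i j, ¬ IsUnit (B i j)) : IsUnit ((1 : M2) - B) := by
  have he : (1 : M2) - B = !![1 - B 0 0, -(B 0 1); -(B 1 0), 1 - B 1 1] := by
    rw [Matrix.eta_fin_two B, Matrix.one_fin_two]
    ext i j
    fin_cases i <;> fin_cases j <;> simp
  rw [he]
  have d1 : IsUnit (1 - B 0 0) := by
    rw [sub_eq_add_neg]; exact isUnit_add_nonunit isUnit_one (by simpa using h 0 0)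
  have d2 : IsUnit (1 - B 1 1) := by
    rw [sub_eq_add_neg]; exact isUnit_add_nonunit isUnit_one (by simpa using h 1 1)
  exact isUnit_fin2_of_diag d1 d2 (by simpa using h 0 1) (by simpa using h 1 0)

lemma unit_row {M : M2} (h : IsUnit M) (i : Fin 2) : IsUnit (M i 0) ∨ IsUnit (M i 1) := by
  rcases isUnit_iff_exists.mp h with ⟨N, hN, -⟩
  by_contra hcon
  push_neg at hcon
  have h1 : (M * N) i i = 1 := by rw [hN, Matrix.one_apply_eq]
  rw [mul_entry] at h1
  have h2 := nonunit_add (nonunit_mul_left (N 0 i) hcon.1) (nonunit_mul_left (N 1 i) hcon.2)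
  rw [h1] at h2
  exact h2 isUnit_one

end MatLocal2

section MatLocal3
variable {R : Type*} [Ring R] [IsLocalRing R]

local notation "M2" => Matrix (Fin 2) (Fin 2) R

lemma simTo_companion_c {a b c d : R} (hc : IsUnit c) :
    ∃ u w : R, SimTo (!![a,b;c,d] : M2) !![0,w;1,u] := by
  obtain ⟨c', hc'c, hcc'⟩ : ∃ c' : R, c' * c = 1 ∧ c * c' = 1 :=
    ⟨↑hc.unit⁻¹, hc.val_inv_mul, hc.mul_val_inv⟩
  refine ⟨a + c' * (d * c), b * c - a * (c' * (d * c)),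
    !![1,a;0,c], !![1,-(a*c');0,c'], ?_, ?_, ?_⟩
  · rw [Matrix.mul_fin_two, Matrix.one_fin_two]
    refine fin2_ext (by noncomm_ring) (by noncomm_ring) (by noncomm_ring) ?_
    calc (0:R) * -(a * c') + c * c' = c * c' := by noncomm_ring
    _ = 1 := hcc'
  · rw [Matrix.mul_fin_two, Matrix.one_fin_two]
    refine fin2_ext (by noncomm_ring) ?_ (by noncomm_ring) ?_
    · calc (1:R) * a + -(a * c') * c = a - a * (c' * c) := by noncomm_ring
      _ = 0 := by rw [hc'c]; noncomm_ring
    · calc (0:R) * a + c' * c = c' * c := by noncomm_ring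
      _ = 1 := hc'c
  · rw [Matrix.mul_fin_two, Matrix.mul_fin_two]
    refine fin2_ext ?_ ?_ ?_ ?_
    · calc (1 * a + -(a * c') * c) * 1 + (1 * b + -(a * c') * d) * 0
          = a - a * (c' * c) := by noncomm_ring
      _ = 0 := by rw [hc'c]; noncomm_ring
    · calc (1 * a + -(a * c') * c) * a + (1 * b + -(a * c') * d) * c
          = a * a - a * ((c' * c) * a) + b * c - a * (c' * (d * c)) := by noncomm_ring
      _ = b * c - a * (c' * (d * c)) := by rw [hc'c]; noncomm_ring
    · calc (0 * a + c' * c) * 1 + (0 * b + c' * d) * 0 = c' * c := by noncomm_ring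
      _ = 1 := hc'c
    · calc (0 * a + c' * c) * a + (0 * b + c' * d) * c
          = (c' * c) * a + c' * (d * c) := by noncomm_ring
      _ = a + c' * (d * c) := by rw [hc'c]; noncomm_ring

lemma simTo_swap {a b c d : R} : SimTo (!![a,b;c,d] : M2) !![d,c;b,a] := by
  refine ⟨!![0,1;1,0], !![0,1;1,0], ?_, ?_, ?_⟩
  · rw [Matrix.mul_fin_two, Matrix.one_fin_two]
    exact fin2_ext (by noncomm_ring) (by noncomm_ring) (by noncomm_ring) (by noncomm_ring)
  · rw [Matrix.mul_fin_two, Matrix.one_fin_two]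
    exact fin2_ext (by noncomm_ring) (by noncomm_ring) (by noncomm_ring) (by noncomm_ring)
  · rw [Matrix.mul_fin_two, Matrix.mul_fin_two]
    exact fin2_ext (by noncomm_ring) (by noncomm_ring) (by noncomm_ring) (by noncomm_ring)

lemma simTo_L {a b c d : R} :
    SimTo (!![a,b;c,d] : M2) !![a - b, b; a + c - b - d, b + d] := by
  refine ⟨!![1,0;-1,1], !![1,0;1,1], ?_, ?_, ?_⟩
  · rw [Matrix.mul_fin_two, Matrix.one_fin_two]
    exact fin2_ext (by noncomm_ring) (by noncomm_ring) (by noncomm_ring) (by noncomm_ring)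
  · rw [Matrix.mul_fin_two, Matrix.one_fin_two]
    exact fin2_ext (by noncomm_ring) (by noncomm_ring) (by noncomm_ring) (by noncomm_ring)
  · rw [Matrix.mul_fin_two, Matrix.mul_fin_two]
    exact fin2_ext (by noncomm_ring) (by noncomm_ring) (by noncomm_ring) (by noncomm_ring)

lemma diag_pow (α δ : R) (k : ℕ) : (!![α,0;0,δ] : M2) ^ k = !![α^k, 0; 0, δ^k] := by
  induction k with
  | zero => rw [pow_zero, Matrix.one_fin_two, pow_zero, pow_zero]
  | succ k ih =>
      rw [pow_succ, ih, Matrix.mul_fin_two]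
      refine fin2_ext ?_ (by noncomm_ring) (by noncomm_ring) ?_
      · rw [← pow_succ]; noncomm_ring
      · rw [← pow_succ]; noncomm_ring

lemma spr_diag {μ v : R} {k : ℕ} (hμ : μ ^ k = 0) (hv : IsUnit v) :
    IsStronglyPiRegular (!![μ,0;0,v] : M2) := by
  obtain ⟨v', hv'v, hvv'⟩ : ∃ v' : R, v' * v = 1 ∧ v * v' = 1 :=
    ⟨↑hv.unit⁻¹, hv.val_inv_mul, hv.mul_val_inv⟩
  constructor
  · refine ⟨k, !![0,0;0,v'], ?_⟩
    rw [diag_pow, diag_pow, Matrix.mul_fin_two, hμ]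
    refine fin2_ext (by noncomm_ring) (by noncomm_ring) (by noncomm_ring) ?_
    calc v ^ k = v ^ k * (v * v') := by rw [hvv', mul_one]
    _ = (v ^ k * v) * v' := by rw [mul_assoc]
    _ = v ^ (k+1) * v' := by rw [← pow_succ]
    _ = 0 * 0 + v ^ (k+1) * v' := by noncomm_ring
  · refine ⟨k, !![0,0;0,v'], ?_⟩
    rw [diag_pow, diag_pow, Matrix.mul_fin_two, hμ]
    refine fin2_ext (by noncomm_ring) (by noncomm_ring) (by noncomm_ring) ?_
    calc v ^ k = (v' * v) * v ^ k := by rw [hv'v, one_mul]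
    _ = v' * (v * v ^ k) := by rw [mul_assoc]
    _ = v' * v ^ (k+1) := by rw [← pow_succ']
    _ = 0 * 0 + v' * v ^ (k+1) := by noncomm_ring

end MatLocal3

section MatLocal4
variable {R : Type*} [Ring R] [IsLocalRing R]

local notation "M2" => Matrix (Fin 2) (Fin 2) R

lemma simTo_companion_root {u w μ : R} (hroot : μ^2 - μ*u - w = 0) :
    SimTo (!![0,w;1,u] : M2) !![μ, 0; 1, u - μ] := by
  refine ⟨!![1,-μ;0,1], !![1,μ;0,1], ?_, ?_, ?_⟩
  · rw [Matrix.mul_fin_two, Matrix.one_fin_two]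
    exact fin2_ext (by noncomm_ring) (by noncomm_ring) (by noncomm_ring) (by noncomm_ring)
  · rw [Matrix.mul_fin_two, Matrix.one_fin_two]
    exact fin2_ext (by noncomm_ring) (by noncomm_ring) (by noncomm_ring) (by noncomm_ring)
  · rw [Matrix.mul_fin_two, Matrix.mul_fin_two]
    refine fin2_ext (by noncomm_ring) ?_ (by noncomm_ring) (by noncomm_ring)
    calc (1 * 0 + μ * 1) * -μ + (1 * w + μ * u) * 1 = -(μ^2 - μ*u - w) := by noncomm_ring
    _ = 0 := by rw [hroot]; simp

lemma simTo_tri_diag {μ v : R} {k : ℕ} (hμ : μ ^ k = 0) (hv : IsUnit v) :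
    SimTo (!![μ,0;1,v] : M2) !![μ,0;0,v] := by
  obtain ⟨v', hv'v, hvv'⟩ : ∃ v' : R, v' * v = 1 ∧ v * v' = 1 :=
    ⟨↑hv.unit⁻¹, hv.val_inv_mul, hv.mul_val_inv⟩
  obtain ⟨s, hs⟩ : ∃ s : R, s = ∑ i ∈ Finset.range k, v'^(i+1) * μ^i := ⟨_, rfl⟩
  have hvs : v * s = ∑ i ∈ Finset.range k, v'^i * μ^i := by
    rw [hs, Finset.mul_sum]
    refine Finset.sum_congr rfl fun i _ => ?_
    calc v * (v'^(i+1) * μ^i) = ((v * v') * v'^i) * μ^i := by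
          rw [pow_succ' v']; noncomm_ring
    _ = v'^i * μ^i := by rw [hvv']; noncomm_ring
  have hsμ : s * μ = ∑ i ∈ Finset.range k, v'^(i+1) * μ^(i+1) := by
    rw [hs, Finset.sum_mul]
    refine Finset.sum_congr rfl fun i _ => ?_
    calc (v'^(i+1) * μ^i) * μ = v'^(i+1) * (μ^i * μ) := by rw [mul_assoc]
    _ = v'^(i+1) * μ^(i+1) := by rw [← pow_succ]
  have tele : v * s - s * μ = 1 := by
    rw [hvs, hsμ, ← Finset.sum_sub_distrib,
      Finset.sum_range_sub' (fun i => v'^i * μ^i) k]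
    simp [hμ]
  refine ⟨!![1,0;-s,1], !![1,0;s,1], ?_, ?_, ?_⟩
  · rw [Matrix.mul_fin_two, Matrix.one_fin_two]
    exact fin2_ext (by noncomm_ring) (by noncomm_ring) (by noncomm_ring) (by noncomm_ring)
  · rw [Matrix.mul_fin_two, Matrix.one_fin_two]
    exact fin2_ext (by noncomm_ring) (by noncomm_ring) (by noncomm_ring) (by noncomm_ring)
  · rw [Matrix.mul_fin_two, Matrix.mul_fin_two]
    refine fin2_ext (by noncomm_ring) (by noncomm_ring) ?_ (by noncomm_ring)
    calc (s * μ + 1 * 1) * 1 + (s * 0 + 1 * v) * -s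
        = 1 - (v * s - s * μ) := by noncomm_ring
    _ = 0 := by rw [tele]; noncomm_ring

lemma isUnit_companion {u w : R} (hw : IsUnit w) : IsUnit (!![0,w;1,u] : M2) := by
  obtain ⟨w', hw'w, hww'⟩ : ∃ w' : R, w' * w = 1 ∧ w * w' = 1 :=
    ⟨↑hw.unit⁻¹, hw.val_inv_mul, hw.mul_val_inv⟩
  refine isUnit_iff_exists.mpr ⟨!![-(u*w'), 1; w', 0], ?_, ?_⟩
  · rw [Matrix.mul_fin_two, Matrix.one_fin_two]
    refine fin2_ext ?_ (by noncomm_ring) (by noncomm_ring) (by noncomm_ring)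
    calc (0:R) * -(u*w') + w * w' = w * w' := by noncomm_ring
    _ = 1 := hww'
  · rw [Matrix.mul_fin_two, Matrix.one_fin_two]
    refine fin2_ext (by noncomm_ring) ?_ (by noncomm_ring) ?_
    · calc -(u*w') * w + 1 * u = u - u * (w' * w) := by noncomm_ring
      _ = 0 := by rw [hw'w]; noncomm_ring
    · calc w' * w + 0 * u = w' * w := by noncomm_ring
      _ = 1 := hw'w

lemma companion2_pow_entry {u w : R} (hu : IsUnit u) (hw : ¬ IsUnit w) (k : ℕ) :
    IsUnit (((!![u,1;w,0] : M2) ^ k) 0 0) := by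
  induction k with
  | zero => rw [pow_zero, Matrix.one_apply_eq]; exact isUnit_one
  | succ k ih =>
      rw [pow_succ, mul_entry]
      have h1 : (!![u,1;w,0] : M2) 0 0 = u := by simp
      have h2 : (!![u,1;w,0] : M2) 1 0 = w := by simp
      rw [h1, h2]
      exact isUnit_add_nonunit (ih.mul hu) (nonunit_mul_right _ hw)

end MatLocal4

section MatLocal5
variable {R : Type*} [Ring R] [IsLocalRing R]

local notation "M2" => Matrix (Fin 2) (Fin 2) R

lemma one_sub_entry00 (e : M2) : ((1:M2) - e) 0 0 = 1 - e 0 0 := by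
  simp [Matrix.sub_apply]
lemma one_sub_entry01 (e : M2) : ((1:M2) - e) 0 1 = -(e 0 1) := by
  simp [Matrix.sub_apply, Matrix.one_apply]
lemma one_sub_entry10 (e : M2) : ((1:M2) - e) 1 0 = -(e 1 0) := by
  simp [Matrix.sub_apply, Matrix.one_apply]
lemma one_sub_entry11 (e : M2) : ((1:M2) - e) 1 1 = 1 - e 1 1 := by
  simp [Matrix.sub_apply]

lemma idem_zero {e : M2} (he : e * e = e) (h : ∀ i j, ¬ IsUnit (e i j)) : e = 0 := by
  obtain ⟨V, hV1, hV2⟩ := isUnit_iff_exists.mp (isUnit_one_sub h)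
  have h0 : e * ((1:M2) - e) = 0 := by rw [mul_sub, mul_one, he, sub_self]
  calc e = e * (((1:M2) - e) * V) := by rw [hV1, mul_one]
  _ = (e * ((1:M2) - e)) * V := by rw [mul_assoc]
  _ = 0 := by rw [h0, zero_mul]

lemma fixed_sim : SimTo (!![0,0;1,1] : M2) !![(1:R),0;0,0] := by
  refine ⟨!![0,1;1,-1], !![1,1;1,0], ?_, ?_, ?_⟩
  · rw [Matrix.mul_fin_two, Matrix.one_fin_two]
    exact fin2_ext (by noncomm_ring) (by noncomm_ring) (by noncomm_ring) (by noncomm_ring)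
  · rw [Matrix.mul_fin_two, Matrix.one_fin_two]
    exact fin2_ext (by noncomm_ring) (by noncomm_ring) (by noncomm_ring) (by noncomm_ring)
  · rw [Matrix.mul_fin_two, Matrix.mul_fin_two]
    exact fin2_ext (by noncomm_ring) (by noncomm_ring) (by noncomm_ring) (by noncomm_ring)

lemma idem_c_unit {e : M2} (he : e * e = e) (hc : IsUnit (e 1 0)) :
    SimTo e !![(1:R),0;0,0] := by
  have he2 := Matrix.eta_fin_two e
  obtain ⟨u, w, hsim⟩ := simTo_companion_c (a := e 0 0) (b := e 0 1) (d := e 1 1) hc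
  rw [← he2] at hsim
  have hFF : (!![0,w;1,u] : M2) * !![0,w;1,u] = !![0,w;1,u] := simTo_idem hsim he
  rw [Matrix.mul_fin_two] at hFF
  have hw : w = 0 := by
    have h00 := congrFun (congrFun hFF 0) 0
    simpa using h00
  have hu : u = 1 := by
    have h10 := congrFun (congrFun hFF 1) 0
    simpa using h10
  rw [hw, hu] at hsim
  exact simTo_trans hsim fixed_sim

lemma idem_TL {e : M2} (he : e * e = e) (h00 : IsUnit (e 0 0)) (h01 : ¬ IsUnit (e 0 1))
    (h10 : ¬ IsUnit (e 1 0)) (h11 : ¬ IsUnit (e 1 1)) : SimTo e !![(1:R),0;0,0] := by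
  have he2 := Matrix.eta_fin_two e
  have hL := simTo_L (a := e 0 0) (b := e 0 1) (c := e 1 0) (d := e 1 1)
  rw [← he2] at hL
  have hL' := simTo_idem hL he
  have hcu : IsUnit ((!![e 0 0 - e 0 1, e 0 1; e 0 0 + e 1 0 - e 0 1 - e 1 1, e 0 1 + e 1 1] : M2) 1 0) := by
    have hexp : e 0 0 + e 1 0 - e 0 1 - e 1 1 = ((e 0 0 + e 1 0) + -(e 0 1)) + -(e 1 1) := by
      noncomm_ring
    have : IsUnit (((e 0 0 + e 1 0) + -(e 0 1)) + -(e 1 1)) :=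
      isUnit_add_nonunit (isUnit_add_nonunit (isUnit_add_nonunit h00 h10) (by simpa using h01))
        (by simpa using h11)
    simpa [hexp] using this
  exact simTo_trans hL (idem_c_unit hL' hcu)

lemma idem_classify {e : M2} (he : e * e = e) :
    (∀ i j, ¬ IsUnit (e i j)) ∨ (∀ i j, ¬ IsUnit (((1:M2) - e) i j)) ∨
      SimTo e !![(1:R),0;0,0] := by
  have he2 := Matrix.eta_fin_two e
  by_cases hc : IsUnit (e 1 0)
  · exact Or.inr (Or.inr (idem_c_unit he hc))
  by_cases hb : IsUnit (e 0 1)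
  · refine Or.inr (Or.inr ?_)
    have hsw := simTo_swap (a := e 0 0) (b := e 0 1) (c := e 1 0) (d := e 1 1)
    rw [← he2] at hsw
    have hsw' := simTo_idem hsw he
    have hcu : IsUnit ((!![e 1 1, e 1 0; e 0 1, e 0 0] : M2) 1 0) := by simpa using hb
    exact simTo_trans hsw (idem_c_unit hsw' hcu)
  by_cases ha : IsUnit (e 0 0)
  · by_cases hd : IsUnit (e 1 1)
    · refine Or.inr (Or.inl ?_)
      have hq1 : e 0 0 * e 0 0 + e 0 1 * e 1 0 = e 0 0 := by
        have h := congrFun (congrFun he 0) 0; rw [mul_entry] at h; exact h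
      have hq2 : e 1 0 * e 0 1 + e 1 1 * e 1 1 = e 1 1 := by
        have h := congrFun (congrFun he 1) 1; rw [mul_entry] at h; exact h
      have hna : ¬ IsUnit (1 - e 0 0) := by
        intro hu1
        have h5 : e 0 1 * e 1 0 = e 0 0 - e 0 0 * e 0 0 := eq_sub_of_add_eq' hq1
        have : e 0 0 * (1 - e 0 0) = e 0 1 * e 1 0 := by
          rw [h5]; noncomm_ring
        exact (nonunit_mul_left (e 1 0) hb) (this ▸ (ha.mul hu1))
      have hnd : ¬ IsUnit (1 - e 1 1) := by
        intro hu1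
        have h5 : e 1 0 * e 0 1 = e 1 1 - e 1 1 * e 1 1 := eq_sub_of_add_eq hq2
        have : e 1 1 * (1 - e 1 1) = e 1 0 * e 0 1 := by
          rw [h5]; noncomm_ring
        exact (nonunit_mul_left (e 0 1) hc) (this ▸ (hd.mul hu1))
      intro i j
      fin_cases i <;> fin_cases j <;>
        simp only [Fin.zero_eta, Fin.mk_one, Fin.isValue, Matrix.sub_apply, Matrix.one_apply_eq,
          Matrix.one_apply_ne (by decide : (0:Fin 2) ≠ 1),
          Matrix.one_apply_ne (by decide : (1:Fin 2) ≠ 0), zero_sub]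
      · exact hna
      · exact fun h => hb (by simpa using h)
      · exact fun h => hc (by simpa using h)
      · exact hnd
    · exact Or.inr (Or.inr (idem_TL he ha hb hc hd))
  by_cases hd : IsUnit (e 1 1)
  · refine Or.inr (Or.inr ?_)
    have hsw := simTo_swap (a := e 0 0) (b := e 0 1) (c := e 1 0) (d := e 1 1)
    rw [← he2] at hsw
    have hsw' := simTo_idem hsw he
    have h00 : IsUnit ((!![e 1 1, e 1 0; e 0 1, e 0 0] : M2) 0 0) := by simpa using hd
    have h01 : ¬ IsUnit ((!![e 1 1, e 1 0; e 0 1, e 0 0] : M2) 0 1) := by simpa using hc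
    have h10 : ¬ IsUnit ((!![e 1 1, e 1 0; e 0 1, e 0 0] : M2) 1 0) := by simpa using hb
    have h11 : ¬ IsUnit ((!![e 1 1, e 1 0; e 0 1, e 0 0] : M2) 1 1) := by simpa using ha
    exact simTo_trans hsw (idem_TL hsw' h00 h01 h10 h11)
  · refine Or.inl ?_
    intro i j
    fin_cases i <;> fin_cases j <;> assumption

end MatLocal5

section Forward
variable {R : Type*} [Ring R] [IsLocalRing R]

local notation "M2" => Matrix (Fin 2) (Fin 2) R

lemma nilpotent_of_nonunit_spr {A : M2} (h : IsStronglyPiRegular A)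
    (hA : ∀ i j, ¬ IsUnit (A i j)) : IsNilpotent A := by
  obtain ⟨⟨n₁, x, hx₁⟩, -⟩ := h
  -- bump the exponent
  have hx : ∀ m k, n₁ ≤ m → A ^ m = A ^ (m + k) * x ^ k := by
    intro m k hm
    induction k with
    | zero => simp
    | succ k ih =>
        have hstep : A ^ (m+k) = A ^ (m+k+1) * x := by
          calc A ^ (m+k) = A ^ (m+k-n₁) * A ^ n₁ := by rw [← pow_add]; congr 1; omega
          _ = A ^ (m+k-n₁) * (A ^ (n₁+1) * x) := by rw [hx₁]
          _ = A ^ (m+k+1) * x := by rw [← mul_assoc, ← pow_add]; congr 2; omega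
        calc A ^ m = A ^ (m+k) * x ^ k := ih
        _ = A ^ (m+k+1) * x * x ^ k := by rw [← hstep]
        _ = A ^ (m+k+1) * (x * x ^ k) := by rw [mul_assoc]
        _ = A ^ (m+k+1) * x ^ (k+1) := by rw [← pow_succ' x]
        _ = A ^ (m+(k+1)) * x ^ (k+1) := by rw [← Nat.add_assoc]
  obtain ⟨n, hn⟩ : ∃ n : ℕ, n = n₁ + 1 := ⟨_, rfl⟩
  have key : A ^ n = A ^ n * (A ^ n * x ^ n) := by
    calc A ^ n = A ^ (n + n) * x ^ n := hx n n (by omega)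
    _ = (A ^ n * A ^ n) * x ^ n := by rw [pow_add]
    _ = A ^ n * (A ^ n * x ^ n) := by rw [mul_assoc]
  have hBent : ∀ i j, ¬ IsUnit ((A ^ n * x ^ n) i j) := by
    have hform : A ^ n * x ^ n = A * (A ^ n₁ * x ^ n) := by
      rw [hn, pow_succ' A, mul_assoc]
    rw [hform]
    exact nonunitE_mul_left hA _
  obtain ⟨V, hV1, hV2⟩ := isUnit_iff_exists.mp (isUnit_one_sub hBent)
  have hz : A ^ n * ((1:M2) - A ^ n * x ^ n) = 0 := by
    rw [mul_sub, mul_one, ← key, sub_self]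
  refine ⟨n, ?_⟩
  calc A ^ n = A ^ n * (((1:M2) - A ^ n * x ^ n) * V) := by rw [hV1, mul_one]
  _ = (A ^ n * ((1:M2) - A ^ n * x ^ n)) * V := by rw [mul_assoc]
  _ = 0 := by rw [hz, zero_mul]

lemma roots_of_spr {u w : R} (hu : IsUnit u) (hw : ¬ IsUnit w)
    (hC : IsStronglyPiRegular (!![u,1;w,0] : M2)) :
    (∃ lam : R, IsUnit lam ∧ lam ^ 2 - lam * u - w = 0) ∧
    (∃ lam : R, ¬ IsUnit lam ∧ lam ^ 2 - lam * u - w = 0) := by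
  obtain ⟨n, e, hn, he, hcomm, hz, hunit⟩ := fitting hC
  rcases idem_classify he with h0 | h1 | hsim
  · -- e = 0 : C would be nilpotent, contradiction
    exfalso
    have he0 : e = 0 := idem_zero he h0
    rw [he0, sub_zero, mul_one] at hz
    have hent := companion2_pow_entry hu hw n
    rw [hz] at hent
    simp only [Matrix.zero_apply] at hent
    exact nonunit_zero (R := R) hent
  · -- e = 1 : C would be a unit, contradiction
    exfalso
    have hf : ((1:M2) - e) * ((1:M2) - e) = (1:M2) - e := by
      calc ((1:M2) - e) * ((1:M2) - e) = 1 - e - e + e * e := by noncomm_ring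
      _ = (1:M2) - e := by rw [he]; noncomm_ring
    have h10 : (1:M2) - e = 0 := idem_zero hf h1
    have he1 : e = 1 := ((sub_eq_zero.mp h10).symm)
    rw [he1, mul_one] at hunit
    have hCu : IsUnit (!![u,1;w,0] : M2) := by simpa using hunit
    rcases unit_row hCu 1 with h | h
    · exact hw (by simpa using h)
    · have h0 : IsUnit (0:R) := by simpa using h
      exact nonunit_zero (R := R) h0
  · obtain ⟨P, Q, hPQ, hQP, hQeP⟩ := hsim
    obtain ⟨C, hCdef⟩ : ∃ C : M2, C = !![u,1;w,0] := ⟨_, rfl⟩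
    rw [← hCdef] at hz hunit hcomm
    obtain ⟨A', hA'⟩ : ∃ A' : M2, A' = Q * C * P := ⟨_, rfl⟩
    obtain ⟨E, hE⟩ : ∃ E : M2, E = (!![(1:R),0;0,0] : M2) := ⟨_, rfl⟩
    rw [← hE] at hQeP
    have hQu : IsUnit Q := isUnit_iff_exists.mpr ⟨P, hQP, hPQ⟩
    -- A' commutes with E
    have hAE : A' * E = Q * (C * e) * P := by
      calc A' * E = (Q * C * P) * (Q * e * P) := by rw [hA', hQeP]
      _ = Q * C * (P * Q) * e * P := by simp [mul_assoc]
      _ = Q * (C * e) * P := by rw [hPQ]; simp [mul_assoc]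
    have hEA : E * A' = Q * (C * e) * P := by
      calc E * A' = (Q * e * P) * (Q * C * P) := by rw [hA', hQeP]
      _ = Q * e * (P * Q) * C * P := by simp [mul_assoc]
      _ = Q * (e * C) * P := by rw [hPQ]; simp [mul_assoc]
      _ = Q * (C * e) * P := by rw [← hcomm]
    have hcommA : A' * E = E * A' := by rw [hAE, hEA]
    -- off diagonal entries vanish
    have hE00 : E 0 0 = 1 := by rw [hE]; simp
    have hE01 : E 0 1 = 0 := by rw [hE]; simp
    have hE10 : E 1 0 = 0 := by rw [hE]; simp
    have hE11 : E 1 1 = 0 := by rw [hE]; simp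
    have hA01 : A' 0 1 = 0 := by
      have h1 := congrFun (congrFun hcommA 0) 1
      rw [mul_entry, mul_entry, hE01, hE11, hE00] at h1
      simpa using h1.symm
    have hA10 : A' 1 0 = 0 := by
      have h1 := congrFun (congrFun hcommA 1) 0
      rw [mul_entry, mul_entry, hE00, hE10, hE11] at h1
      simpa using h1
    obtain ⟨α, hα⟩ : ∃ α : R, α = A' 0 0 := ⟨_, rfl⟩
    obtain ⟨δ, hδ⟩ : ∃ δ : R, δ = A' 1 1 := ⟨_, rfl⟩
    have hA'eta : A' = !![α, 0; 0, δ] := by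
      rw [Matrix.eta_fin_two A', hA01, hA10, hα, hδ]
    -- powers and nilpotency of δ
    have hApow : A' ^ n = Q * C ^ n * P := by rw [hA']; exact conj_pow2 hPQ hQP n
    have hone : (1:M2) - E = Q * ((1:M2) - e) * P := by
      calc (1:M2) - E = Q * P - Q * e * P := by rw [hQP, hQeP]
      _ = Q * ((1:M2) - e) * P := by noncomm_ring
    have hzA : A' ^ n * ((1:M2) - E) = 0 := by
      calc A' ^ n * ((1:M2) - E) = (Q * C ^ n * P) * (Q * ((1:M2) - e) * P) := by
            rw [hApow, hone]
      _ = Q * C ^ n * (P * Q) * ((1:M2) - e) * P := by simp [mul_assoc]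
      _ = Q * (C ^ n * ((1:M2) - e)) * P := by rw [hPQ]; simp [mul_assoc]
      _ = 0 := by rw [hz]; simp
    have hδn : δ ^ n = 0 := by
      have h2 : ((1:M2) - E) = !![0,0;0,1] := by
        rw [hE, Matrix.one_fin_two]
        ext i j
        fin_cases i <;> fin_cases j <;> simp
      rw [hA'eta, diag_pow, h2, Matrix.mul_fin_two] at hzA
      have h3 := congrFun (congrFun hzA 1) 1
      simpa using h3
    -- α is a unit
    have hunitA : IsUnit (A' * E + 1 - E) := by
      have hPu : IsUnit P := isUnit_iff_exists.mpr ⟨Q, hPQ, hQP⟩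
      have hform : A' * E + 1 - E = Q * (C * e + 1 - e) * P := by
        calc A' * E + 1 - E = Q * (C * e) * P + (Q * ((1:M2) - e) * P) := by
              rw [hAE]
              rw [← hone]; noncomm_ring
        _ = Q * (C * e + 1 - e) * P := by noncomm_ring
      rw [hform]
      exact (hQu.mul hunit).mul hPu
    have hαu : IsUnit α := by
      have h4 : A' * E + 1 - E = !![α,0;0,1] := by
        rw [hA'eta, hE, Matrix.mul_fin_two, Matrix.one_fin_two]
        ext i j
        fin_cases i <;> fin_cases j <;> simp
      rw [h4] at hunitA
      rcases unit_row hunitA 0 with h | h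
      · simpa using h
      · have h0 : IsUnit (0:R) := by simpa using h
        exact absurd h0 (nonunit_zero (R := R))
    -- row equations
    have hQC : Q * C = !![α,0;0,δ] * Q := by
      calc Q * C = Q * C * (P * Q) := by rw [hPQ, mul_one]
      _ = (Q * C * P) * Q := by simp [mul_assoc]
      _ = !![α,0;0,δ] * Q := by rw [← hA', hA'eta]
    have hC00 : C 0 0 = u := by rw [hCdef]; simp
    have hC01 : C 0 1 = 1 := by rw [hCdef]; simp
    have hC10 : C 1 0 = w := by rw [hCdef]; simp
    have hC11 : C 1 1 = 0 := by rw [hCdef]; simp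
    have rel1 : Q 0 0 * u + Q 0 1 * w = α * Q 0 0 := by
      have h5 := congrFun (congrFun hQC 0) 0
      rw [mul_entry, mul_entry, hC00, hC10] at h5
      simpa using h5
    have rel2 : Q 0 0 = α * Q 0 1 := by
      have h5 := congrFun (congrFun hQC 0) 1
      rw [mul_entry, mul_entry, hC01, hC11] at h5
      simpa using h5
    have rel3 : Q 1 0 * u + Q 1 1 * w = δ * Q 1 0 := by
      have h5 := congrFun (congrFun hQC 1) 0
      rw [mul_entry, mul_entry, hC00, hC10] at h5
      simpa using h5
    have rel4 : Q 1 0 = δ * Q 1 1 := by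
      have h5 := congrFun (congrFun hQC 1) 1
      rw [mul_entry, mul_entry, hC01, hC11] at h5
      simpa using h5
    have hδnu : ¬ IsUnit δ := nonunit_of_nilpotent ⟨n, hδn⟩
    -- units in rows of Q
    have hq : IsUnit (Q 0 1) := by
      rcases unit_row hQu 0 with h | h
      · rw [rel2] at h; exact isUnit_right_of_mul h
      · exact h
    have hs : IsUnit (Q 1 1) := by
      rcases unit_row hQu 1 with h | h
      · rw [rel4] at h; exact isUnit_right_of_mul h
      · exact h
    constructor
    · -- unit root from row 0
      obtain ⟨q', hq'q, hqq'⟩ : ∃ q' : R, q' * Q 0 1 = 1 ∧ Q 0 1 * q' = 1 :=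
        ⟨↑hq.unit⁻¹, hq.val_inv_mul, hq.mul_val_inv⟩
      refine ⟨q' * (α * Q 0 1), ?_, ?_⟩
      · exact (isUnit_of_right_inv hq'q).mul (hαu.mul hq)
      · have hkey : α * (α * Q 0 1) - ((α * Q 0 1) * u + Q 0 1 * w) = 0 := by
          have step : α * (α * Q 0 1) = (α * Q 0 1) * u + Q 0 1 * w := by
            calc α * (α * Q 0 1) = α * Q 0 0 := by rw [← rel2]
            _ = Q 0 0 * u + Q 0 1 * w := rel1.symm
            _ = (α * Q 0 1) * u + Q 0 1 * w := by rw [← rel2]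
          rw [step, sub_self]
        have e1 : (q' * (α * Q 0 1)) * (q' * (α * Q 0 1)) = q' * (α * (α * Q 0 1)) := by
          calc (q' * (α * Q 0 1)) * (q' * (α * Q 0 1))
              = q' * (α * ((Q 0 1 * q') * (α * Q 0 1))) := by noncomm_ring
          _ = q' * (α * (α * Q 0 1)) := by rw [hqq']; noncomm_ring
        have e2 : (q' * (α * Q 0 1)) * u = q' * ((α * Q 0 1) * u) := by noncomm_ring
        have e3 : w = q' * (Q 0 1 * w) := by rw [← mul_assoc, hq'q, one_mul]
        calc (q' * (α * Q 0 1)) ^ 2 - (q' * (α * Q 0 1)) * u - w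
            = (q' * (α * Q 0 1)) * (q' * (α * Q 0 1)) - (q' * (α * Q 0 1)) * u - w := by
              rw [pow_two]
        _ = q' * (α * (α * Q 0 1)) - q' * ((α * Q 0 1) * u) - q' * (Q 0 1 * w) := by
              rw [e1, e2, ← e3]
        _ = q' * (α * (α * Q 0 1) - ((α * Q 0 1) * u + Q 0 1 * w)) := by noncomm_ring
        _ = 0 := by rw [hkey, mul_zero]
    · -- nonunit root from row 1
      obtain ⟨s', hs's, hss'⟩ : ∃ s' : R, s' * Q 1 1 = 1 ∧ Q 1 1 * s' = 1 :=
        ⟨↑hs.unit⁻¹, hs.val_inv_mul, hs.mul_val_inv⟩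
      refine ⟨s' * (δ * Q 1 1), ?_, ?_⟩
      · intro hμu
        apply hδnu
        have hδeq : δ = Q 1 1 * (s' * (δ * Q 1 1)) * s' := by
          calc δ = (Q 1 1 * s') * δ * (Q 1 1 * s') := by rw [hss']; noncomm_ring
          _ = Q 1 1 * (s' * (δ * Q 1 1)) * s' := by noncomm_ring
        rw [hδeq]
        exact (hs.mul hμu).mul (isUnit_of_right_inv hs's)
      · have hkey : δ * (δ * Q 1 1) - ((δ * Q 1 1) * u + Q 1 1 * w) = 0 := by
          have step : δ * (δ * Q 1 1) = (δ * Q 1 1) * u + Q 1 1 * w := by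
            calc δ * (δ * Q 1 1) = δ * Q 1 0 := by rw [← rel4]
            _ = Q 1 0 * u + Q 1 1 * w := rel3.symm
            _ = (δ * Q 1 1) * u + Q 1 1 * w := by rw [← rel4]
          rw [step, sub_self]
        have e1 : (s' * (δ * Q 1 1)) * (s' * (δ * Q 1 1)) = s' * (δ * (δ * Q 1 1)) := by
          calc (s' * (δ * Q 1 1)) * (s' * (δ * Q 1 1))
              = s' * (δ * ((Q 1 1 * s') * (δ * Q 1 1))) := by noncomm_ring
          _ = s' * (δ * (δ * Q 1 1)) := by rw [hss']; noncomm_ring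
        have e2 : (s' * (δ * Q 1 1)) * u = s' * ((δ * Q 1 1) * u) := by noncomm_ring
        have e3 : w = s' * (Q 1 1 * w) := by rw [← mul_assoc, hs's, one_mul]
        calc (s' * (δ * Q 1 1)) ^ 2 - (s' * (δ * Q 1 1)) * u - w
            = (s' * (δ * Q 1 1)) * (s' * (δ * Q 1 1)) - (s' * (δ * Q 1 1)) * u - w := by
              rw [pow_two]
        _ = s' * (δ * (δ * Q 1 1)) - s' * ((δ * Q 1 1) * u) - s' * (Q 1 1 * w) := by
              rw [e1, e2, ← e3]
        _ = s' * (δ * (δ * Q 1 1) - ((δ * Q 1 1) * u + Q 1 1 * w)) := by noncomm_ring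
        _ = 0 := by rw [hkey, mul_zero]

end Forward

section Backward
variable {R : Type*} [Ring R] [IsLocalRing R]

local notation "M2" => Matrix (Fin 2) (Fin 2) R

lemma spr_companion
    (hnil : ∀ A : M2, (∀ i j, ¬ IsUnit (A i j)) → IsNilpotent A)
    (hroots : ∀ u w : R, IsUnit u → ¬ IsUnit w →
      (∃ lam : R, IsUnit lam ∧ lam ^ 2 - lam * u - w = 0) ∧
      (∃ lam : R, ¬ IsUnit lam ∧ lam ^ 2 - lam * u - w = 0))
    (u w : R) : IsStronglyPiRegular (!![0,w;1,u] : M2) := by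
  by_cases hw : IsUnit w
  · exact spr_of_isUnit (isUnit_companion hw)
  by_cases hu : IsUnit u
  · obtain ⟨-, μ, hμn, hμr⟩ := hroots u w hu hw
    have hdiag : IsNilpotent (!![μ,0;0,0] : M2) := by
      apply hnil
      intro i j; fin_cases i <;> fin_cases j
      · simpa using hμn
      · simpa using nonunit_zero (R := R)
      · simpa using nonunit_zero (R := R)
      · simpa using nonunit_zero (R := R)
    obtain ⟨k, hk⟩ := hdiag
    have hμk : μ ^ k = 0 := by
      rw [diag_pow] at hk
      have h0 := congrFun (congrFun hk 0) 0
      simpa using h0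
    have hv : IsUnit (u - μ) := by
      have hex : u - μ = u + -μ := by noncomm_ring
      rw [hex]; exact isUnit_add_nonunit hu (by simpa using hμn)
    have s1 := simTo_companion_root hμr
    have s2 := simTo_tri_diag hμk hv
    have s3 := spr_diag hμk hv
    exact simTo_spr (simTo_symm (simTo_trans s1 s2)) s3
  · have hsq : (!![0,w;1,u] : M2) ^ 2 = !![w, w*u; u, w + u*u] := by
      rw [pow_two, Matrix.mul_fin_two]
      exact fin2_ext (by noncomm_ring) (by noncomm_ring) (by noncomm_ring) (by noncomm_ring)
    have hn2 : IsNilpotent ((!![0,w;1,u] : M2) ^ 2) := by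
      rw [hsq]; apply hnil
      intro i j; fin_cases i <;> fin_cases j
      · simpa using hw
      · simpa using nonunit_mul_left u hw
      · simpa using hu
      · simpa using nonunit_add hw (nonunit_mul_left u hu)
    obtain ⟨m, hm⟩ := hn2
    refine spr_of_nilpotent ⟨2*m, ?_⟩
    rw [pow_mul]; exact hm

lemma backward
    (hnil : ∀ A : M2, (∀ i j, ¬ IsUnit (A i j)) → IsNilpotent A)
    (hroots : ∀ u w : R, IsUnit u → ¬ IsUnit w →
      (∃ lam : R, IsUnit lam ∧ lam ^ 2 - lam * u - w = 0) ∧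
      (∃ lam : R, ¬ IsUnit lam ∧ lam ^ 2 - lam * u - w = 0))
    (A : M2) : IsStronglyPiRegular A := by
  have he2 := Matrix.eta_fin_two A
  by_cases hc : IsUnit (A 1 0)
  · obtain ⟨u, w, hsim⟩ := simTo_companion_c (a := A 0 0) (b := A 0 1) (d := A 1 1) hc
    rw [← he2] at hsim
    exact simTo_spr (simTo_symm hsim) (spr_companion hnil hroots u w)
  by_cases hb : IsUnit (A 0 1)
  · have hsw := simTo_swap (a := A 0 0) (b := A 0 1) (c := A 1 0) (d := A 1 1)
    rw [← he2] at hsw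
    obtain ⟨u, w, hsim⟩ := simTo_companion_c (a := A 1 1) (b := A 1 0) (d := A 0 0)
      (show IsUnit ((!![A 1 1, A 1 0; A 0 1, A 0 0] : M2) 1 0) from by simpa using hb)
    exact simTo_spr (simTo_symm (simTo_trans hsw hsim)) (spr_companion hnil hroots u w)
  by_cases ha : IsUnit (A 0 0)
  · by_cases hd : IsUnit (A 1 1)
    · refine spr_of_isUnit ?_
      rw [he2]; exact isUnit_fin2_of_diag ha hd hb hc
    · have hL := simTo_L (a := A 0 0) (b := A 0 1) (c := A 1 0) (d := A 1 1)
      rw [← he2] at hL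
      have hcu : IsUnit (A 0 0 + A 1 0 - A 0 1 - A 1 1) := by
        have hexp : A 0 0 + A 1 0 - A 0 1 - A 1 1
            = ((A 0 0 + A 1 0) + -(A 0 1)) + -(A 1 1) := by noncomm_ring
        rw [hexp]
        exact isUnit_add_nonunit (isUnit_add_nonunit (isUnit_add_nonunit ha hc)
          (by simpa using hb)) (by simpa using hd)
      obtain ⟨u, w, hsim⟩ := simTo_companion_c (a := A 0 0 - A 0 1) (b := A 0 1)
        (d := A 0 1 + A 1 1) hcu
      exact simTo_spr (simTo_symm (simTo_trans hL hsim)) (spr_companion hnil hroots u w)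
  by_cases hd : IsUnit (A 1 1)
  · have hsw := simTo_swap (a := A 0 0) (b := A 0 1) (c := A 1 0) (d := A 1 1)
    rw [← he2] at hsw
    have hL := simTo_L (a := A 1 1) (b := A 1 0) (c := A 0 1) (d := A 0 0)
    have hcu : IsUnit (A 1 1 + A 0 1 - A 1 0 - A 0 0) := by
      have hexp : A 1 1 + A 0 1 - A 1 0 - A 0 0
          = ((A 1 1 + A 0 1) + -(A 1 0)) + -(A 0 0) := by noncomm_ring
      rw [hexp]
      exact isUnit_add_nonunit (isUnit_add_nonunit (isUnit_add_nonunit hd hb)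
        (by simpa using hc)) (by simpa using ha)
    obtain ⟨u, w, hsim⟩ := simTo_companion_c (a := A 1 1 - A 1 0) (b := A 1 0)
      (d := A 1 0 + A 0 0) hcu
    exact simTo_spr (simTo_symm (simTo_trans hsw (simTo_trans hL hsim)))
      (spr_companion hnil hroots u w)
  · refine spr_of_nilpotent (hnil A ?_)
    intro i j; fin_cases i <;> fin_cases j <;> assumption

end Backward

/-- For a local ring `R` (where `J(R)` is the set of nonunits), `M₂(R)` is strongly
π-regular iff every matrix in `M₂(J(R))` is nilpotent and for all `u ∈ U(R)`,
`w ∈ J(R)`, the polynomial `t² - ut - w` has a left root in `U(R)` and a left root in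
`J(R)`. -/
theorem matrix_two_stronglyPiRegular_iff {R : Type*} [Ring R] [IsLocalRing R] :
    (∀ A : Matrix (Fin 2) (Fin 2) R, IsStronglyPiRegular A) ↔
      ((∀ A : Matrix (Fin 2) (Fin 2) R, (∀ i j, ¬ IsUnit (A i j)) → IsNilpotent A) ∧
        ∀ u w : R, IsUnit u → ¬ IsUnit w →
          (∃ lam : R, IsUnit lam ∧ lam ^ 2 - lam * u - w = 0) ∧
          (∃ lam : R, ¬ IsUnit lam ∧ lam ^ 2 - lam * u - w = 0)) := by
  constructor
  · intro h
    exact ⟨fun A hA => nilpotent_of_nonunit_spr (h A) hA,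
      fun u w hu hw => roots_of_spr hu hw (h _)⟩
  · rintro ⟨hnil, hroots⟩ A
    exact backward hnil hroots A
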